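/- If G is a graph in which the Δ-convex hull of every pair of adjacent vertices is V(G), then the Δ-convex cover number, the Δ-convex partition number and the chromatic number of G coincide: φ_c(G) = Θ_c(G) = χ(G). -/

import Mathlib

variable {V : Type*}

/-- A set `S` is Δ-convex: no vertex outside `S` is adjacent to two adjacent vertices of `S`. -/
def DeltaConvex (G : SimpleGraph V) (S : Set V) : Prop :=
  ∀ ⦃u v w : V⦄, u ∈ S → v ∈ S → G.Adj u v → G.Adj w u → G.Adj w v → w ∈ S

/-- The Δ-convex hull of `S`: the smallest Δ-convex set containing `S`. -/
def DeltaHull (G : SimpleGraph V) (S : Set V) : Set V :=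
  ⋂₀ {T | DeltaConvex G T ∧ S ⊆ T}

/-- A Δ-convex `p`-cover. -/
def IsDeltaCover (G : SimpleGraph V) {p : ℕ} (F : Fin p → Set V) : Prop :=
  (∀ i, DeltaConvex G (F i)) ∧ (⋃ i, F i) = Set.univ ∧
    ∀ i, ¬ F i ⊆ ⋃ j ∈ ({i}ᶜ : Set (Fin p)), F j

/-- A Δ-convex `p`-partition. -/
def IsDeltaPartition (G : SimpleGraph V) {p : ℕ} (F : Fin p → Set V) : Prop :=
  (∀ i, DeltaConvex G (F i)) ∧ (⋃ i, F i) = Set.univ ∧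
    (∀ i, (F i).Nonempty) ∧ ∀ i j, i ≠ j → Disjoint (F i) (F j)

/-- The Δ-convex cover number `φ_c(G)`. -/
noncomputable def coverNumber (G : SimpleGraph V) : ℕ :=
  sInf {p | 2 ≤ p ∧ ∃ F : Fin p → Set V, IsDeltaCover G F}

/-- The Δ-convex partition number `Θ_c(G)`. -/
noncomputable def partitionNumber (G : SimpleGraph V) : ℕ :=
  sInf {p | 2 ≤ p ∧ ∃ F : Fin p → Set V, IsDeltaPartition G F}

/-- A vertex is Δ-extreme iff it lies in no triangle (this characterization is used directly). -/
def DeltaExtreme (G : SimpleGraph V) (u : V) : Prop :=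
  ∀ v w : V, ¬ (G.Adj u v ∧ G.Adj u w ∧ G.Adj v w)

/-- A Δ-convex set containing an edge is everything (under the hull hypothesis). -/
lemma convex_eq_univ_of_edge (G : SimpleGraph V)
    (hhull : ∀ u v : V, G.Adj u v → DeltaHull G {u, v} = Set.univ)
    {S : Set V} (hS : DeltaConvex G S) {u v : V} (hu : u ∈ S) (hv : v ∈ S)
    (h : G.Adj u v) : S = Set.univ := by
  have hsub : DeltaHull G {u, v} ⊆ S := by
    apply Set.sInter_subset_of_mem
    refine ⟨hS, ?_⟩
    intro x hx
    rcases hx with rfl | hx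
    · exact hu
    · rcases hx with rfl; exact hv
  rw [hhull u v h] at hsub
  exact Set.eq_univ_of_univ_subset hsub

/-- An independent set is Δ-convex. -/
lemma indep_deltaConvex (G : SimpleGraph V) {S : Set V}
    (h : ∀ u ∈ S, ∀ v ∈ S, ¬ G.Adj u v) : DeltaConvex G S := by
  intro u v w hu hv huv _ _
  exact absurd huv (h u hu v hv)

theorem stmt6 [Fintype V] (G : SimpleGraph V) (hconn : G.Connected)
    (hedge : ∃ u v : V, G.Adj u v)
    (hhull : ∀ u v : V, G.Adj u v → DeltaHull G {u, v} = Set.univ) :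
    coverNumber G = partitionNumber G ∧
      (partitionNumber G : ℕ∞) = G.chromaticNumber := by
  classical
  obtain ⟨a, b, hab⟩ := hedge
  set n : ℕ := ENat.toNat G.chromaticNumber with hn
  have hcol : G.Colorable n := G.colorable_chromaticNumber_of_fintype
  have hne : G.chromaticNumber ≠ ⊤ := by
    have := G.colorable_of_fintype.chromaticNumber_le
    exact (lt_of_le_of_lt this (WithTop.coe_lt_top _)).ne
  have hχ : G.chromaticNumber = (n : ℕ∞) := (ENat.coe_toNat hne).symm
  obtain ⟨C⟩ := hcol
  -- n ≥ 2
  have hn2 : 2 ≤ n := by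
    have hne' : C a ≠ C b := C.valid hab
    have : Nontrivial (Fin n) := ⟨⟨C a, C b, hne'⟩⟩
    have := Fintype.one_lt_card (α := Fin n)
    exact (by simpa using this : 1 < n)
  -- the partition from the coloring
  have hpart : ∃ F : Fin n → Set V, IsDeltaPartition G F := by
    refine ⟨fun i => C ⁻¹' {i}, ?_, ?_, ?_, ?_⟩
    · intro i
      apply indep_deltaConvex
      intro u hu v hv huv
      exact C.valid huv (hu.trans hv.symm)
    · ext v; simp only [Set.mem_iUnion, Set.mem_univ, iff_true]
      exact ⟨C v, rfl⟩
    · intro i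
      by_contra hemp
      rw [Set.not_nonempty_iff_eq_empty] at hemp
      have hCne : ∀ v, C v ≠ i := by
        intro v hv
        have : v ∈ C ⁻¹' {i} := hv
        simp [hemp] at this
      let C' : G.Coloring {j : Fin n // j ≠ i} :=
        SimpleGraph.Coloring.mk (fun v => ⟨C v, hCne v⟩)
          (fun h hc => C.valid h (by simpa using congrArg Subtype.val hc))
      have hcard : Fintype.card {j : Fin n // j ≠ i} = n - 1 := by
        simp [Fintype.card_subtype_compl]
      have := C'.colorable.chromaticNumber_le
      rw [hχ, hcard, Nat.cast_le] at this
      omega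
    · intro i j hij
      rw [Set.disjoint_left]
      intro x hx hx'
      exact hij (hx.symm.trans hx')
  -- any cover forces p ≥ n
  have hcov_ge : ∀ p : ℕ, 2 ≤ p → (∃ F : Fin p → Set V, IsDeltaCover G F) → n ≤ p := by
    intro p hp ⟨F, hconv, hcovU, hirr⟩
    have : Nontrivial (Fin p) := Fin.nontrivial_iff_two_le.mpr hp
    -- each F i is independent
    have hind : ∀ i, ∀ u ∈ F i, ∀ v ∈ F i, ¬ G.Adj u v := by
      intro i u hu v hv huv
      have huniv : F i = Set.univ := convex_eq_univ_of_edge G hhull (hconv i) hu hv huv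
      obtain ⟨j, hj⟩ := exists_ne i
      apply hirr j
      intro x _
      simp only [Set.mem_iUnion, Set.mem_compl_iff, Set.mem_singleton_iff]
      exact ⟨i, fun h => hj h.symm, huniv ▸ Set.mem_univ x⟩
    have hex : ∀ v : V, ∃ i, v ∈ F i := by
      intro v
      have : v ∈ ⋃ i, F i := hcovU ▸ Set.mem_univ v
      simpa using this
    let f : V → Fin p := fun v => (hex v).choose
    have hf : ∀ v, v ∈ F (f v) := fun v => (hex v).choose_spec
    have Cp : G.Coloring (Fin p) :=
      SimpleGraph.Coloring.mk f
        (fun {u v} h hc => hind (f u) u (hf u) v (hc ▸ hf v) h)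
    have := Cp.colorable.chromaticNumber_le
    rw [hχ] at this
    simpa using this
  -- partition → cover
  have hpc : ∀ p : ℕ, (∃ F : Fin p → Set V, IsDeltaPartition G F) →
      (∃ F : Fin p → Set V, IsDeltaCover G F) := by
    intro p ⟨F, hconv, hcovU, hnon, hdisj⟩
    refine ⟨F, hconv, hcovU, ?_⟩
    intro i hsub
    obtain ⟨x, hx⟩ := hnon i
    have := hsub hx
    simp only [Set.mem_iUnion, Set.mem_compl_iff, Set.mem_singleton_iff] at this
    obtain ⟨j, hji, hxj⟩ := this
    exact (hdisj i j (fun h => hji h.symm)).le_bot ⟨hx, hxj⟩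
  have hnP : n ∈ {p | 2 ≤ p ∧ ∃ F : Fin p → Set V, IsDeltaPartition G F} := ⟨hn2, hpart⟩
  have hnC : n ∈ {p | 2 ≤ p ∧ ∃ F : Fin p → Set V, IsDeltaCover G F} :=
    ⟨hn2, hpc n hpart⟩
  have hPeq : partitionNumber G = n := by
    apply le_antisymm (Nat.sInf_le hnP)
    apply le_csInf ⟨n, hnP⟩
    rintro p ⟨hp2, hF⟩
    exact hcov_ge p hp2 (hpc p hF)
  have hCeq : coverNumber G = n := by
    apply le_antisymm (Nat.sInf_le hnC)
    apply le_csInf ⟨n, hnC⟩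
    rintro p ⟨hp2, hF⟩
    exact hcov_ge p hp2 hF
  refine ⟨hCeq.trans hPeq.symm, ?_⟩
  rw [hPeq, hχ]
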